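/- Let G=(V,E) be an arbitrary connected simple graph (not necessarily finite) containing a directed cycle C, and let X_0 : V → ℤ/3ℤ be an initial 3-coloring whose contour integral ∮_C dX_0 is nonzero. Then the activity α of the 3-color CCA trajectory (X_t)_{t≥0} satisfies α ≥ |∮_C dX_0| / |V(C)|. -/
import Mathlib


noncomputable section
attribute [local instance] Classical.propDecidable

open Filter

variable {V : Type*}

/-- Unique representative in `{-1,0,1}` of an element of `ℤ/3ℤ`. -/
def ZMod.repInt (a : ZMod 3) : ℤ := if a = 0 then 0 else if a = 1 then 1 else -1

/-- One step of the 3-color cyclic cellular automaton. -/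
def ccaStep (G : SimpleGraph V) (X : V → ZMod 3) : V → ZMod 3 :=
  fun v => if ∃ u, G.Adj v u ∧ X u = X v + 1 then X v + 1 else X v

/-- The CCA trajectory started from `X₀`. -/
def ccaTraj (G : SimpleGraph V) (X₀ : V → ZMod 3) : ℕ → V → ZMod 3 :=
  fun t => (ccaStep G)^[t] X₀

/-- A vertex is excited at time `t` for CCA iff its color advances. -/
def ccaExcited (G : SimpleGraph V) (X₀ : V → ZMod 3) (t : ℕ) (v : V) : Prop :=
  ccaTraj G X₀ (t + 1) v = ccaTraj G X₀ t v + 1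

/-- Number of excitations of `x` at times `0, …, t-1` (CCA). -/
def ccaNe (G : SimpleGraph V) (X₀ : V → ZMod 3) (t : ℕ) (x : V) : ℕ :=
  ((Finset.range t).filter fun s => ccaExcited G X₀ s x).card

/-- The CCA 1-form `dX` on ordered pairs of vertices. -/
def dXcca (X : V → ZMod 3) (u v : V) : ℤ := (X v - X u).repInt

/-- Path integral of the CCA 1-form along a walk. -/
def walkIntCCA {G : SimpleGraph V} (X : V → ZMod 3) {x y : V} (w : G.Walk x y) : ℤ :=
  (w.darts.map fun d => dXcca X d.toProd.1 d.toProd.2).sum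

lemma zmod3_cases (a : ZMod 3) : a = 0 ∨ a = 1 ∨ a = 2 := by revert a; decide
lemma repInt_zero : (0 : ZMod 3).repInt = 0 := if_pos rfl
lemma repInt_one : (1 : ZMod 3).repInt = 1 := by
  rw [ZMod.repInt, if_neg (by decide), if_pos rfl]
lemma repInt_two : (2 : ZMod 3).repInt = -1 := by
  rw [ZMod.repInt, if_neg (by decide), if_neg (by decide)]

lemma ccaStep_eq_or (G : SimpleGraph V) (X : V → ZMod 3) (u : V) :
    ccaStep G X u = X u ∨ ccaStep G X u = X u + 1 := by
  unfold ccaStep; split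
  · exact Or.inr rfl
  · exact Or.inl rfl

lemma ccaStep_eq_succ_of (G : SimpleGraph V) (X : V → ZMod 3) {u w : V}
    (h : G.Adj u w) (hw : X w = X u + 1) : ccaStep G X u = X u + 1 := by
  unfold ccaStep; rw [if_pos ⟨w, h, hw⟩]

lemma dX_step (G : SimpleGraph V) (X : V → ZMod 3) {u v : V} (h : G.Adj u v) :
    dXcca (ccaStep G X) u v = dXcca X u v
      + (if ccaStep G X v = X v + 1 then (1:ℤ) else 0)
      - (if ccaStep G X u = X u + 1 then (1:ℤ) else 0) := by
  by_cases hu : ccaStep G X u = X u + 1 <;> by_cases hv : ccaStep G X v = X v + 1 <;>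
    [skip; skip; skip; skip]
  · rw [if_pos hu, if_pos hv]
    unfold dXcca
    rw [hu, hv, add_sub_add_right_eq_sub]
    ring
  · have hv' : ccaStep G X v = X v := (ccaStep_eq_or G X v).resolve_right hv
    have h2 : X v - X u ≠ 2 := by
      intro hh
      apply hv
      apply ccaStep_eq_succ_of G X h.symm
      have : X v = X u + 2 := by rw [← hh]; ring
      rw [this]; show X u = X u + 2 + 1; rw [add_assoc]
      norm_num
      decide
    rw [if_pos hu, if_neg hv]
    unfold dXcca
    rw [hu, hv']
    have harg : X v - (X u + 1) = (X v - X u) - 1 := by ring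
    rw [harg]
    rcases zmod3_cases (X v - X u) with ha | ha | ha <;> rw [ha]
    · rw [show (0:ZMod 3) - 1 = 2 by decide, repInt_zero, repInt_two]; ring
    · rw [show (1:ZMod 3) - 1 = 0 by decide, repInt_zero, repInt_one]; ring
    · exact absurd ha h2
  · have hu' : ccaStep G X u = X u := (ccaStep_eq_or G X u).resolve_right hu
    have h1 : X v - X u ≠ 1 := by
      intro hh
      apply hu
      apply ccaStep_eq_succ_of G X h
      rw [← hh]; ring
    rw [if_neg hu, if_pos hv]
    unfold dXcca
    rw [hu', hv]
    have harg : (X v + 1) - X u = (X v - X u) + 1 := by ring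
    rw [harg]
    rcases zmod3_cases (X v - X u) with ha | ha | ha <;> rw [ha]
    · rw [show (0:ZMod 3) + 1 = 1 by decide, repInt_zero, repInt_one]; ring
    · exact absurd ha h1
    · rw [show (2:ZMod 3) + 1 = 0 by decide, repInt_zero, repInt_two]; ring
  · have hu' : ccaStep G X u = X u := (ccaStep_eq_or G X u).resolve_right hu
    have hv' : ccaStep G X v = X v := (ccaStep_eq_or G X v).resolve_right hv
    rw [if_neg hu, if_neg hv]
    unfold dXcca
    rw [hu', hv']
    ring

lemma ccaTraj_succ (G : SimpleGraph V) (X₀ : V → ZMod 3) (t : ℕ) :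
    ccaTraj G X₀ (t+1) = ccaStep G (ccaTraj G X₀ t) :=
  Function.iterate_succ_apply' _ _ _

lemma ccaNe_zero (G : SimpleGraph V) (X₀ : V → ZMod 3) (x : V) : ccaNe G X₀ 0 x = 0 := by
  simp [ccaNe]

lemma ccaNe_succ (G : SimpleGraph V) (X₀ : V → ZMod 3) (t : ℕ) (x : V) :
    ccaNe G X₀ (t+1) x = ccaNe G X₀ t x + if ccaExcited G X₀ t x then 1 else 0 := by
  unfold ccaNe
  rw [Finset.range_add_one, Finset.filter_insert]
  split
  · rw [Finset.card_insert_of_notMem (by simp)]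
  · simp

lemma ccaNe_le (G : SimpleGraph V) (X₀ : V → ZMod 3) (t : ℕ) (x : V) :
    ccaNe G X₀ t x ≤ t := by
  calc ccaNe G X₀ t x ≤ (Finset.range t).card := Finset.card_filter_le _ _
  _ = t := Finset.card_range t

lemma excited_iff (G : SimpleGraph V) (X₀ : V → ZMod 3) (t : ℕ) (w : V) :
    (ccaStep G (ccaTraj G X₀ t) w = ccaTraj G X₀ t w + 1) ↔ ccaExcited G X₀ t w := by
  rw [ccaExcited, ccaTraj_succ]

lemma dX_traj (G : SimpleGraph V) (X₀ : V → ZMod 3) {u v : V} (h : G.Adj u v) (t : ℕ) :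
    dXcca (ccaTraj G X₀ t) u v
      = dXcca X₀ u v + (ccaNe G X₀ t v : ℤ) - ccaNe G X₀ t u := by
  induction t with
  | zero => simp [ccaTraj, ccaNe]
  | succ t ih =>
    rw [ccaTraj_succ, dX_step G _ h, ih, ccaNe_succ, ccaNe_succ]
    simp only [excited_iff]
    by_cases hE : ccaExcited G X₀ t v <;> by_cases hF : ccaExcited G X₀ t u <;>
      simp [hE, hF] <;> push_cast <;> ring

lemma abs_dX_le (X : V → ZMod 3) (u v : V) : |dXcca X u v| ≤ 1 := by
  unfold dXcca ZMod.repInt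
  split_ifs <;> simp

lemma ne_edge_bound (G : SimpleGraph V) (X₀ : V → ZMod 3) {u v : V} (h : G.Adj u v) (t : ℕ) :
    |(ccaNe G X₀ t v : ℤ) - ccaNe G X₀ t u| ≤ 2 := by
  have h1 := dX_traj G X₀ h t
  have h2 : (ccaNe G X₀ t v : ℤ) - ccaNe G X₀ t u
      = dXcca (ccaTraj G X₀ t) u v - dXcca X₀ u v := by linarith
  rw [h2]
  calc |dXcca (ccaTraj G X₀ t) u v - dXcca X₀ u v|
      ≤ |dXcca (ccaTraj G X₀ t) u v| + |dXcca X₀ u v| := abs_sub _ _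
  _ ≤ 1 + 1 := add_le_add (abs_dX_le _ _ _) (abs_dX_le _ _ _)
  _ = 2 := by norm_num

lemma ne_walk_bound (G : SimpleGraph V) (X₀ : V → ZMod 3) {x y : V} (w : G.Walk x y) (t : ℕ) :
    |(ccaNe G X₀ t y : ℤ) - ccaNe G X₀ t x| ≤ 2 * w.length := by
  induction w with
  | nil => simp
  | @cons a b z h p ih =>
    have h1 := ne_edge_bound G X₀ h t
    calc |(ccaNe G X₀ t z : ℤ) - ccaNe G X₀ t a|
        ≤ |(ccaNe G X₀ t z : ℤ) - ccaNe G X₀ t b| + |(ccaNe G X₀ t b : ℤ) - ccaNe G X₀ t a| := by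
          have := abs_sub_abs_le_abs_sub ((ccaNe G X₀ t z : ℤ)) ((ccaNe G X₀ t b : ℤ))
          exact abs_sub_le _ _ _
    _ ≤ 2 * p.length + 2 := add_le_add ih h1
    _ = 2 * (SimpleGraph.Walk.cons h p).length := by
        rw [SimpleGraph.Walk.length_cons]; push_cast; ring

lemma walkInt_cons {G : SimpleGraph V} (X : V → ZMod 3) {x y z : V}
    (h : G.Adj x y) (p : G.Walk y z) :
    walkIntCCA X (SimpleGraph.Walk.cons h p) = dXcca X x y + walkIntCCA X p := by
  simp [walkIntCCA]

lemma walkInt_traj (G : SimpleGraph V) (X₀ : V → ZMod 3) {x y : V} (w : G.Walk x y) (t : ℕ) :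
    walkIntCCA (ccaTraj G X₀ t) w
      = walkIntCCA X₀ w + (ccaNe G X₀ t y : ℤ) - ccaNe G X₀ t x := by
  induction w with
  | nil => simp [walkIntCCA]
  | @cons a b z h p ih =>
    rw [walkInt_cons, walkInt_cons, ih, dX_traj G X₀ h t]
    ring

lemma walkInt_conserved (G : SimpleGraph V) (X₀ : V → ZMod 3) {x : V} (w : G.Walk x x) (t : ℕ) :
    walkIntCCA (ccaTraj G X₀ t) w = walkIntCCA X₀ w := by
  rw [walkInt_traj]; ring

lemma repInt_eq_one {a : ZMod 3} (h : a.repInt = 1) : a = 1 := by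
  rcases zmod3_cases a with rfl | rfl | rfl
  · rw [repInt_zero] at h; norm_num at h
  · rfl
  · rw [repInt_two] at h; norm_num at h

lemma repInt_eq_neg_one {a : ZMod 3} (h : a.repInt = -1) : a = 2 := by
  rcases zmod3_cases a with rfl | rfl | rfl
  · rw [repInt_zero] at h; norm_num at h
  · rw [repInt_one] at h; norm_num at h
  · rfl

lemma dX_le_excited_fst (G : SimpleGraph V) (X₀ : V → ZMod 3) (t : ℕ) (d : G.Dart) :
    dXcca (ccaTraj G X₀ t) d.toProd.1 d.toProd.2
      ≤ if ccaExcited G X₀ t d.toProd.1 then (1:ℤ) else 0 := by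
  by_cases hx : dXcca (ccaTraj G X₀ t) d.toProd.1 d.toProd.2 = 1
  · have ha : ccaTraj G X₀ t d.toProd.2 = ccaTraj G X₀ t d.toProd.1 + 1 := by
      have := repInt_eq_one hx
      have h2 : ccaTraj G X₀ t d.toProd.2 - ccaTraj G X₀ t d.toProd.1 = 1 := this
      linear_combination (norm := ring_nf) h2
    have hexc : ccaExcited G X₀ t d.toProd.1 := by
      rw [ccaExcited, ccaTraj_succ]
      exact ccaStep_eq_succ_of G _ d.adj ha
    rw [if_pos hexc, hx]
  · have h1 : dXcca (ccaTraj G X₀ t) d.toProd.1 d.toProd.2 ≤ 0 := by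
      have := (abs_le.mp (abs_dX_le (ccaTraj G X₀ t) d.toProd.1 d.toProd.2))
      omega
    have : (0:ℤ) ≤ if ccaExcited G X₀ t d.toProd.1 then (1:ℤ) else 0 := by positivity
    linarith

lemma dX_le_excited_snd (G : SimpleGraph V) (X₀ : V → ZMod 3) (t : ℕ) (d : G.Dart) :
    -dXcca (ccaTraj G X₀ t) d.toProd.1 d.toProd.2
      ≤ if ccaExcited G X₀ t d.toProd.2 then (1:ℤ) else 0 := by
  by_cases hx : dXcca (ccaTraj G X₀ t) d.toProd.1 d.toProd.2 = -1
  · have ha : ccaTraj G X₀ t d.toProd.1 = ccaTraj G X₀ t d.toProd.2 + 1 := by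
      have h2 : ccaTraj G X₀ t d.toProd.2 - ccaTraj G X₀ t d.toProd.1 = 2 := repInt_eq_neg_one hx
      have h3 : ccaTraj G X₀ t d.toProd.1 = ccaTraj G X₀ t d.toProd.2 - 2 := by
        linear_combination -h2
      rw [h3]
      have : (2:ZMod 3) + 1 = 0 := by decide
      linear_combination -this
    have hexc : ccaExcited G X₀ t d.toProd.2 := by
      rw [ccaExcited, ccaTraj_succ]
      exact ccaStep_eq_succ_of G _ d.adj.symm ha
    rw [if_pos hexc, hx]; norm_num
  · have h1 : -dXcca (ccaTraj G X₀ t) d.toProd.1 d.toProd.2 ≤ 0 := by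
      have := (abs_le.mp (abs_dX_le (ccaTraj G X₀ t) d.toProd.1 d.toProd.2))
      omega
    have : (0:ℤ) ≤ if ccaExcited G X₀ t d.toProd.2 then (1:ℤ) else 0 := by positivity
    linarith

lemma list_sum_comm {α β : Type*} (l : List α) (s : Finset β) (F : α → β → ℤ) :
    (l.map (fun a => ∑ b ∈ s, F a b)).sum = ∑ b ∈ s, (l.map (fun a => F a b)).sum := by
  induction l with
  | nil => simp
  | cons a l ih => simp [ih, Finset.sum_add_distrib]

lemma exists_le_of_sum (l : List ℤ) (h : l ≠ []) : ∃ a ∈ l, l.sum ≤ (l.length : ℤ) * a := by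
  induction l with
  | nil => exact absurd rfl h
  | cons x l ih =>
    rcases eq_or_ne l [] with rfl | hl
    · exact ⟨x, by simp⟩
    · obtain ⟨a, ha, hs⟩ := ih hl
      rcases le_total x a with hxa | hax
      · refine ⟨a, by simp [ha], ?_⟩
        simp only [List.sum_cons, List.length_cons]
        push_cast
        nlinarith
      · refine ⟨x, by simp, ?_⟩
        simp only [List.sum_cons, List.length_cons]
        have hlen : (0:ℤ) ≤ l.length := by positivity
        push_cast
        nlinarith

lemma map_neg_sum {α : Type*} (l : List α) (f : α → ℤ) :
    (l.map (fun a => -f a)).sum = -(l.map f).sum := by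
  induction l with
  | nil => simp
  | cons a l ih => simp [ih]; ring

/-- Lower bound for the activity: if some directed cycle `c` has nonzero contour integral
of `dX₀`, then at every vertex the activity is at least `|∮_c dX₀| / |V(c)|`. -/
theorem cca_activity_lower_bound_of_nonsingular_cycle (G : SimpleGraph V)
    (hlf : ∀ v : V, (G.neighborSet v).Finite) (hconn : G.Connected)
    (X₀ : V → ZMod 3) (v : V) (c : G.Walk v v) (hc : c.IsCycle)
    (hnz : walkIntCCA X₀ c ≠ 0) :
    ∀ x : V, (|walkIntCCA X₀ c| : ℝ) / (c.length : ℝ) ≤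
      limsup (fun t : ℕ => (ccaNe G X₀ t x : ℝ) / t) atTop := by
  intro x
  set k : ℤ := walkIntCCA X₀ c with hk
  have hn3 : 3 ≤ c.length := hc.three_le_length
  -- step 1: uniform excitation bound per time
  obtain ⟨g, hg⟩ : ∃ g : G.Dart → V, ∀ s : ℕ,
      |k| ≤ (c.darts.map fun d => if ccaExcited G X₀ s (g d) then (1:ℤ) else 0).sum := by
    rcases hnz.lt_or_gt with hneg | hpos
    · refine ⟨fun d => d.toProd.2, fun s => ?_⟩
      have hcons := walkInt_conserved G X₀ c s
      rw [abs_of_neg hneg]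
      calc -k = -(walkIntCCA (ccaTraj G X₀ s) c) := by rw [hcons]
        _ = (c.darts.map fun d =>
              -dXcca (ccaTraj G X₀ s) d.toProd.1 d.toProd.2).sum := by
            rw [walkIntCCA, ← map_neg_sum]
        _ ≤ _ := List.sum_le_sum (fun d _ => dX_le_excited_snd G X₀ s d)
    · refine ⟨fun d => d.toProd.1, fun s => ?_⟩
      have hcons := walkInt_conserved G X₀ c s
      rw [abs_of_pos hpos]
      calc k = walkIntCCA (ccaTraj G X₀ s) c := hcons.symm
        _ ≤ _ := List.sum_le_sum (fun d _ => dX_le_excited_fst G X₀ s d)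
  -- step 2: summed over time
  have hne : ∀ t : ℕ, |k| * t ≤ (c.darts.map fun d => (ccaNe G X₀ t (g d) : ℤ)).sum := by
    intro t
    have hcard : ∀ w : V, (ccaNe G X₀ t w : ℤ)
        = ∑ s ∈ Finset.range t, (if ccaExcited G X₀ s w then (1:ℤ) else 0) := by
      intro w
      rw [ccaNe, Finset.card_filter]
      push_cast
      rfl
    calc |k| * t = ∑ _s ∈ Finset.range t, |k| := by
          rw [Finset.sum_const, Finset.card_range]; ring
      _ ≤ ∑ s ∈ Finset.range t,
            (c.darts.map fun d => if ccaExcited G X₀ s (g d) then (1:ℤ) else 0).sum :=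
          Finset.sum_le_sum fun s _ => hg s
      _ = (c.darts.map fun d => (ccaNe G X₀ t (g d) : ℤ)).sum := by
          rw [← list_sum_comm]
          exact congrArg List.sum (List.map_congr_left fun d _ => (hcard (g d)).symm)
  -- step 3: pigeonhole over time
  have hdne : c.darts ≠ [] := by
    have : 0 < c.darts.length := by rw [SimpleGraph.Walk.length_darts]; omega
    exact List.ne_nil_of_length_pos this
  have hch : ∀ t : ℕ, ∃ d : {d : G.Dart // d ∈ c.darts},
      |k| * t ≤ (c.length : ℤ) * ccaNe G X₀ t (g d.1) := by
    intro t
    obtain ⟨a, ha, hs⟩ := exists_le_of_sum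
      (c.darts.map fun d => (ccaNe G X₀ t (g d) : ℤ))
      (by simpa using hdne)
    obtain ⟨d, hd, rfl⟩ := List.mem_map.mp ha
    refine ⟨⟨d, hd⟩, ?_⟩
    have hlen : (c.darts.map fun d => (ccaNe G X₀ t (g d) : ℤ)).length = c.length := by
      rw [List.length_map, SimpleGraph.Walk.length_darts]
    calc |k| * t ≤ (c.darts.map fun d => (ccaNe G X₀ t (g d) : ℤ)).sum := hne t
      _ ≤ _ := by rw [← hlen]; exact hs
  haveI : Finite {d : G.Dart // d ∈ c.darts} := by
    have := c.darts.finite_toSet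
    exact this.to_subtype
  choose f hf using hch
  obtain ⟨d0, hd0⟩ := Finite.exists_infinite_fiber f
  have hT : (f ⁻¹' {d0}).Infinite := Set.infinite_coe_iff.mp hd0
  set x₀ : V := g d0.1 with hx₀
  have hTprop : ∀ t ∈ f ⁻¹' {d0}, |k| * t ≤ (c.length : ℤ) * ccaNe G X₀ t x₀ := by
    intro t ht
    have := hf t
    rwa [show f t = d0 from ht] at this
  -- step 4: limsup bound
  obtain ⟨p⟩ : Nonempty (G.Walk x₀ x) := hconn.preconnected x₀ x
  set C : ℤ := 2 * p.length with hCdef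
  have hC0 : (0:ℤ) ≤ C := by positivity
  have hCb : ∀ t : ℕ, (ccaNe G X₀ t x₀ : ℤ) ≤ ccaNe G X₀ t x + C := by
    intro t
    have := ne_walk_bound G X₀ p t
    have h2 := (abs_le.mp this).1
    linarith
  have hbdd : IsBoundedUnder (· ≤ ·) atTop (fun t : ℕ => (ccaNe G X₀ t x : ℝ) / t) := by
    refine isBoundedUnder_of ⟨1, fun t => ?_⟩
    rcases Nat.eq_zero_or_pos t with rfl | ht
    · simp
    · rw [div_le_one (by positivity)]
      exact_mod_cast ccaNe_le G X₀ t x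
  apply le_of_forall_sub_le
  intro ε hε
  apply Filter.le_limsup_of_frequently_le ?_ hbdd
  rw [Filter.frequently_atTop]
  intro N
  set M : ℕ := max N (⌈(C:ℝ)/ε⌉₊ + 1) with hM
  obtain ⟨t, htT, htM⟩ := hT.exists_gt M
  have htN : N ≤ t := le_trans (le_max_left _ _) (le_of_lt htM)
  refine ⟨t, htN, ?_⟩
  have ht0 : (0:ℝ) < t := by
    have : 1 ≤ t := by omega
    exact_mod_cast Nat.lt_of_lt_of_le Nat.zero_lt_one this
  have hnR : (0:ℝ) < (c.length : ℝ) := by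
    have : 0 < c.length := by omega
    exact_mod_cast this
  have h1 : (|k| : ℝ) * t ≤ (c.length : ℝ) * ccaNe G X₀ t x₀ := by
    exact_mod_cast hTprop t htT
  have h2 : (ccaNe G X₀ t x₀ : ℝ) ≤ (ccaNe G X₀ t x : ℝ) + (C : ℝ) := by
    exact_mod_cast hCb t
  have h3 : (C:ℝ)/t < ε := by
    have hM2 : (⌈(C:ℝ)/ε⌉₊ + 1 : ℕ) ≤ M := le_max_right _ _
    have htc : ((⌈(C:ℝ)/ε⌉₊ : ℝ) + 1) ≤ (t:ℝ) := by
      have : (⌈(C:ℝ)/ε⌉₊ + 1 : ℕ) ≤ t := le_trans hM2 (le_of_lt htM)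
      exact_mod_cast this
    have hceil : (C:ℝ)/ε ≤ ⌈(C:ℝ)/ε⌉₊ := Nat.le_ceil _
    have hlt : (C:ℝ)/ε < t := by linarith
    rw [div_lt_iff₀ ht0]
    rw [div_lt_iff₀ hε] at hlt
    linarith
  have key1 : (|k| : ℝ)/(c.length : ℝ) ≤ (ccaNe G X₀ t x₀ : ℝ)/t := by
    rw [div_le_div_iff₀ hnR ht0]
    nlinarith
  have key2 : (ccaNe G X₀ t x₀ : ℝ)/t ≤ (ccaNe G X₀ t x : ℝ)/t + (C:ℝ)/t := by
    rw [← add_div]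
    gcongr
  linarith
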